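/- Let Ext : [N] × [D] → [M] be a strong (log₂ N − Δ, ν)-extractor, let S ⊆ [N] with |S| ≥ N/2^Δ, and let ε₁, ε₂, ε₃ > 0 satisfy ε₁ε₂ε₃ ≥ 2ν. Then for all but at most an ε₁ fraction of seeds z ∈ [D], for all but at most an ε₂ fraction of indices i ∈ [M], the set S_i^z := {x ∈ [N] : Ext(x, z) = i} satisfies |S_i^z ∩ S| ∈ [(1−ε₃)|S|/M, (1+ε₃)|S|/M]. -/

import Mathlib

set_option maxHeartbeats 1000000


/-- Let `Ext : [N] × [D] → [M]` be a strong `(log₂ N − Δ, ν)`-extractor (expressed by the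
statistical-distance condition over all probability distributions `p` on `[N]` with
min-entropy at least `log₂ N − Δ`, i.e. `p x ≤ 2^Δ/N` pointwise). Let `S ⊆ [N]` with
`|S| ≥ N/2^Δ`, and let `ε₁, ε₂, ε₃ > 0` with `ε₁ε₂ε₃ ≥ 2ν`. Then for all but at most an
`ε₁` fraction of seeds `z`, for all but at most an `ε₂` fraction of indices `i`, the set
`S_i^z = Ext(·,z)⁻¹(i)` satisfies `|S_i^z ∩ S| ∈ [(1-ε₃)|S|/M, (1+ε₃)|S|/M]`. -/
theorem stmt_10 (N D M : ℕ) (hN : 0 < N) (hD : 0 < D) (hM : 0 < M)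
    (Ext : Fin N → Fin D → Fin M) (Δ ν : ℝ) (hν : 0 ≤ ν)
    (hExt : ∀ p : Fin N → ℝ, (∀ x, 0 ≤ p x) → (∑ x, p x) = 1 →
      (∀ x, p x ≤ (2 : ℝ) ^ Δ / N) →
      ∑ z : Fin D, ∑ i : Fin M,
        |(∑ x ∈ Finset.univ.filter (fun x => Ext x z = i), p x) / D -
          1 / ((D : ℝ) * M)| ≤ 2 * ν)
    (S : Finset (Fin N)) (hS : (N : ℝ) / (2 : ℝ) ^ Δ ≤ S.card)
    (ε₁ ε₂ ε₃ : ℝ) (hε₁ : 0 < ε₁) (hε₂ : 0 < ε₂) (hε₃ : 0 < ε₃)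
    (hprod : 2 * ν ≤ ε₁ * ε₂ * ε₃) :
    (({z : Fin D |
        ε₂ * M < (({i : Fin M |
          ¬ ((1 - ε₃) * S.card / M ≤ ((S.filter (fun x => Ext x z = i)).card : ℝ) ∧
             ((S.filter (fun x => Ext x z = i)).card : ℝ) ≤ (1 + ε₃) * S.card / M)} :
          Set (Fin M)).ncard : ℝ)} : Set (Fin D)).ncard : ℝ) ≤ ε₁ * D := by
  classical
  have hN' : (0:ℝ) < N := by exact_mod_cast hN
  have hD' : (0:ℝ) < D := by exact_mod_cast hD
  have hM' : (0:ℝ) < M := by exact_mod_cast hM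
  have h2 : (0:ℝ) < (2:ℝ) ^ Δ := Real.rpow_pos_of_pos (by norm_num) Δ
  have hs : (0:ℝ) < (S.card : ℝ) := lt_of_lt_of_le (div_pos hN' h2) hS
  set s : ℝ := (S.card : ℝ) with hsdef
  -- the uniform distribution on S
  set p : Fin N → ℝ := fun x => if x ∈ S then s⁻¹ else 0 with hp
  have hpnn : ∀ x, 0 ≤ p x := by
    intro x; simp only [hp]; split <;> positivity
  have hpsum : (∑ x, p x) = 1 := by
    simp only [hp, Finset.sum_ite_mem, Finset.univ_inter, Finset.sum_const,
      nsmul_eq_mul]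
    field_simp
    exact hsdef.symm
  have hpbd : ∀ x, p x ≤ (2:ℝ) ^ Δ / N := by
    intro x
    simp only [hp]
    split
    · rw [inv_eq_one_div, div_le_div_iff₀ hs hN']
      rw [div_le_iff₀ h2] at hS
      nlinarith
    · positivity
  have key := hExt p hpnn hpsum hpbd
  -- rewrite the inner sums
  have hsum_Si : ∀ (z : Fin D) (i : Fin M),
      (∑ x ∈ Finset.univ.filter (fun x => Ext x z = i), p x)
        = ((S.filter (fun x => Ext x z = i)).card : ℝ) / s := by
    intro z i
    simp only [hp, Finset.sum_ite_mem]
    have : Finset.univ.filter (fun x => Ext x z = i) ∩ S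
        = S.filter (fun x => Ext x z = i) := by
      ext x; simp [and_comm]
    rw [this, Finset.sum_const, nsmul_eq_mul]
    ring
  -- bad index sets as finsets
  set badI : Fin D → Finset (Fin M) := fun z => Finset.univ.filter (fun i =>
      ¬ ((1 - ε₃) * s / M ≤ ((S.filter (fun x => Ext x z = i)).card : ℝ) ∧
         ((S.filter (fun x => Ext x z = i)).card : ℝ) ≤ (1 + ε₃) * s / M)) with hbadI
  set badZ : Finset (Fin D) := Finset.univ.filter (fun z => ε₂ * M < ((badI z).card : ℝ))
    with hbadZ
  -- rewrite the goal in terms of badZ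
  have hIcard : ∀ z : Fin D,
      ({i : Fin M |
          ¬ ((1 - ε₃) * s / M ≤ ((S.filter (fun x => Ext x z = i)).card : ℝ) ∧
             ((S.filter (fun x => Ext x z = i)).card : ℝ) ≤ (1 + ε₃) * s / M)} :
          Set (Fin M)).ncard = (badI z).card := by
    intro z
    rw [show ({i : Fin M |
          ¬ ((1 - ε₃) * s / M ≤ ((S.filter (fun x => Ext x z = i)).card : ℝ) ∧
             ((S.filter (fun x => Ext x z = i)).card : ℝ) ≤ (1 + ε₃) * s / M)} :
          Set (Fin M)) = ↑(badI z) by ext i; simp [hbadI]]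
    exact Set.ncard_coe_finset _
  have hgoal : ({z : Fin D |
        ε₂ * M < (({i : Fin M |
          ¬ ((1 - ε₃) * s / M ≤ ((S.filter (fun x => Ext x z = i)).card : ℝ) ∧
             ((S.filter (fun x => Ext x z = i)).card : ℝ) ≤ (1 + ε₃) * s / M)} :
          Set (Fin M)).ncard : ℝ)} : Set (Fin D)) = ↑badZ := by
    ext z
    simp only [Set.mem_setOf_eq, hIcard z, hbadZ, Finset.coe_filter,
      Finset.mem_univ, true_and, Set.mem_setOf_eq]
  rw [hgoal, Set.ncard_coe_finset]
  -- per bad (z,i) lower bound on the term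
  have hterm : ∀ z : Fin D, ∀ i ∈ badI z,
      ε₃ / ((D:ℝ) * M) ≤ |((S.filter (fun x => Ext x z = i)).card : ℝ) / s / D
        - 1 / ((D : ℝ) * M)| := by
    intro z i hi
    rw [hbadI] at hi
    simp only [Finset.mem_filter, Finset.mem_univ, true_and, not_and_or, not_le] at hi
    set t : ℝ := ((S.filter (fun x => Ext x z = i)).card : ℝ) with ht
    have htnn : 0 ≤ t := ht ▸ Nat.cast_nonneg _
    rcases hi with hlt | hgt
    · -- t < (1-ε₃)*s/M
      have h1 : t * M < (1 - ε₃) * s := by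
        rw [← lt_div_iff₀ hM']; exact hlt
      have h2 : t / s / D ≤ (1 - ε₃) / ((D:ℝ) * M) := by
        rw [div_div, div_le_div_iff₀ (mul_pos hs hD') (mul_pos hD' hM')]
        nlinarith
      have h3 : ε₃ / ((D:ℝ) * M) ≤ 1 / ((D:ℝ) * M) - t / s / D := by
        have : (1 - ε₃) / ((D:ℝ) * M) = 1 / ((D:ℝ) * M) - ε₃ / ((D:ℝ) * M) := by ring
        linarith [h2.trans_eq this]
      calc ε₃ / ((D:ℝ) * M) ≤ 1 / ((D:ℝ) * M) - t / s / D := h3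
        _ = -(t / s / D - 1 / ((D:ℝ) * M)) := by ring
        _ ≤ |t / s / D - 1 / ((D:ℝ) * M)| := neg_le_abs _
    · -- (1+ε₃)*s/M < t
      have h1 : (1 + ε₃) * s < t * M := by
        rw [← div_lt_iff₀ hM']; exact hgt
      have h2 : (1 + ε₃) / ((D:ℝ) * M) ≤ t / s / D := by
        rw [div_div, div_le_div_iff₀ (mul_pos hD' hM') (mul_pos hs hD')]
        nlinarith
      have h3 : ε₃ / ((D:ℝ) * M) ≤ t / s / D - 1 / ((D:ℝ) * M) := by
        have : (1 + ε₃) / ((D:ℝ) * M) = 1 / ((D:ℝ) * M) + ε₃ / ((D:ℝ) * M) := by ring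
        linarith [this ▸ h2]
      exact h3.trans (le_abs_self _)
  -- per bad z lower bound
  have hz : ∀ z ∈ badZ, ε₂ * ε₃ / D ≤
      ∑ i : Fin M, |((S.filter (fun x => Ext x z = i)).card : ℝ) / s / D
        - 1 / ((D : ℝ) * M)| := by
    intro z hz
    rw [hbadZ, Finset.mem_filter] at hz
    have hcard : ε₂ * M ≤ ((badI z).card : ℝ) := le_of_lt hz.2
    have step1 : ∑ i ∈ badI z, |((S.filter (fun x => Ext x z = i)).card : ℝ) / s / D
          - 1 / ((D : ℝ) * M)| ≤
        ∑ i : Fin M, |((S.filter (fun x => Ext x z = i)).card : ℝ) / s / D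
          - 1 / ((D : ℝ) * M)| := by
      apply Finset.sum_le_sum_of_subset_of_nonneg (Finset.subset_univ _)
      intro i _ _; exact abs_nonneg _
    have step2 : ((badI z).card : ℝ) * (ε₃ / ((D:ℝ) * M)) ≤
        ∑ i ∈ badI z, |((S.filter (fun x => Ext x z = i)).card : ℝ) / s / D
          - 1 / ((D : ℝ) * M)| := by
      calc ((badI z).card : ℝ) * (ε₃ / ((D:ℝ) * M))
          = ∑ _i ∈ badI z, ε₃ / ((D:ℝ) * M) := by
            rw [Finset.sum_const, nsmul_eq_mul]
        _ ≤ _ := Finset.sum_le_sum (fun i hi => hterm z i hi)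
    have step3 : ε₂ * ε₃ / D ≤ ((badI z).card : ℝ) * (ε₃ / ((D:ℝ) * M)) := by
      have : ε₂ * M * (ε₃ / ((D:ℝ) * M)) = ε₂ * ε₃ / D := by
        field_simp
      nlinarith [mul_le_mul_of_nonneg_right hcard (by positivity : (0:ℝ) ≤ ε₃ / ((D:ℝ) * M))]
    linarith
  -- global bound
  have hglobal : (badZ.card : ℝ) * (ε₂ * ε₃ / D) ≤ 2 * ν := by
    have h1 : ∑ z ∈ badZ, ∑ i : Fin M,
        |((S.filter (fun x => Ext x z = i)).card : ℝ) / s / D - 1 / ((D : ℝ) * M)| ≤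
        ∑ z : Fin D, ∑ i : Fin M,
        |((S.filter (fun x => Ext x z = i)).card : ℝ) / s / D - 1 / ((D : ℝ) * M)| := by
      apply Finset.sum_le_sum_of_subset_of_nonneg (Finset.subset_univ _)
      intro z _ _
      apply Finset.sum_nonneg
      intro i _; exact abs_nonneg _
    have h2 : (badZ.card : ℝ) * (ε₂ * ε₃ / D) ≤ ∑ z ∈ badZ, ∑ i : Fin M,
        |((S.filter (fun x => Ext x z = i)).card : ℝ) / s / D - 1 / ((D : ℝ) * M)| := by
      calc (badZ.card : ℝ) * (ε₂ * ε₃ / D) = ∑ _z ∈ badZ, ε₂ * ε₃ / D := by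
            rw [Finset.sum_const, nsmul_eq_mul]
        _ ≤ _ := Finset.sum_le_sum hz
    have h3 : ∑ z : Fin D, ∑ i : Fin M,
        |((S.filter (fun x => Ext x z = i)).card : ℝ) / s / D - 1 / ((D : ℝ) * M)| ≤ 2 * ν := by
      calc _ = ∑ z : Fin D, ∑ i : Fin M,
          |(∑ x ∈ Finset.univ.filter (fun x => Ext x z = i), p x) / D - 1 / ((D : ℝ) * M)| := by
            apply Finset.sum_congr rfl; intro z _
            apply Finset.sum_congr rfl; intro i _
            rw [hsum_Si z i]
        _ ≤ 2 * ν := key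
    linarith
  by_contra hcon
  push_neg at hcon
  have hc : (0:ℝ) < ε₂ * ε₃ / D := by positivity
  have : ε₁ * D * (ε₂ * ε₃ / D) < (badZ.card : ℝ) * (ε₂ * ε₃ / D) :=
    mul_lt_mul_of_pos_right hcon hc
  have heq : ε₁ * D * (ε₂ * ε₃ / D) = ε₁ * ε₂ * ε₃ := by
    field_simp
  linarith
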